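/- Let γ be the Euler–Mascheroni constant and let m_n' := ∫_0^∞ (-log u - γ)^n e^{-u} du be the n-th central moment of the standard Gumbel distribution. Then m_n'/n! → e^{-γ} as n → ∞; equivalently, m_n' ~ n! e^{-γ} as n → ∞. -/

import Mathlib

open Real MeasureTheory Set Filter



lemma myInt (n : ℕ) {r : ℝ} (hr : 0 < r) :
    IntegrableOn (fun t : ℝ => t ^ n * Real.exp (-(r * t))) (Set.Ioi 0) := by
  apply integrable_of_isBigO_exp_neg (half_pos hr)
  · fun_prop
  · have h1 : Tendsto (fun x : ℝ => x ^ n * Real.exp (-(r / 2 * x))) atTop (nhds 0) := by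
      have h0 : Tendsto (fun y : ℝ => (2 / r) ^ n * (y ^ n * Real.exp (-y))) atTop (nhds 0) := by
        simpa using (tendsto_pow_mul_exp_neg_atTop_nhds_zero n).const_mul ((2 / r) ^ n)
      have h2 : Tendsto (fun x : ℝ => r / 2 * x) atTop atTop :=
        Tendsto.const_mul_atTop (half_pos hr) tendsto_id
      have := h0.comp h2
      convert this using 2 with x
      simp only [Function.comp]
      rw [mul_pow, ← mul_assoc]
      have hh : (2 / r) * (r / 2) = 1 := by field_simp
      rw [← mul_assoc, ← mul_pow, hh, one_pow, one_mul]
    rw [Asymptotics.isBigO_iff]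
    refine ⟨1, ?_⟩
    have h2 : ∀ᶠ x : ℝ in atTop, x ^ n * Real.exp (-(r / 2 * x)) ≤ 1 :=
      h1.eventually_le_const one_pos
    filter_upwards [h2, eventually_ge_atTop (0 : ℝ)] with x hx hx0
    rw [Real.norm_eq_abs, Real.norm_eq_abs, abs_of_nonneg (by positivity),
      abs_of_nonneg (Real.exp_pos _).le, one_mul]
    calc x ^ n * Real.exp (-(r * x))
        = (x ^ n * Real.exp (-(r / 2 * x))) * Real.exp (-(r / 2 * x)) := by
          rw [mul_assoc, ← Real.exp_add]; ring_nf
      _ ≤ 1 * Real.exp (-(r / 2 * x)) :=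
          mul_le_mul_of_nonneg_right hx (Real.exp_pos _).le
      _ = Real.exp (-(r / 2) * x) := by rw [one_mul, neg_mul]

lemma myGamma (n : ℕ) {r : ℝ} (hr : 0 < r) :
    ∫ t in Set.Ioi (0 : ℝ), t ^ n * Real.exp (-(r * t)) = n.factorial / r ^ (n + 1) := by
  have h := Real.integral_rpow_mul_exp_neg_mul_Ioi (a := (n : ℝ) + 1) (by positivity) hr
  rw [show ((n : ℝ) + 1) - 1 = (n : ℝ) by ring] at h
  rw [MeasureTheory.setIntegral_congr_fun measurableSet_Ioi
    (g := fun t : ℝ => t ^ ((n : ℝ)) * Real.exp (-(r * t)))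
    (fun x hx => by simp [Real.rpow_natCast]), h, Real.Gamma_nat_eq_factorial,
    show ((n : ℝ) + 1) = ((n + 1 : ℕ) : ℝ) by push_cast; ring, Real.rpow_natCast]
  rw [one_div, inv_pow, inv_mul_eq_div]



lemma img (c : ℝ) :
    (fun t : ℝ => Real.exp (-(t + c))) '' (Set.Ici 0) = Set.Ioc 0 (Real.exp (-c)) := by
  ext u
  constructor
  · rintro ⟨t, ht, rfl⟩
    simp only [mem_Ici] at ht
    exact ⟨Real.exp_pos _, Real.exp_le_exp.2 (by linarith)⟩
  · rintro ⟨hu1, hu2⟩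
    refine ⟨-Real.log u - c, ?_, ?_⟩
    · simp only [mem_Ici, sub_nonneg, le_neg]
      exact (Real.log_le_iff_le_exp hu1).2 hu2
    · show Real.exp (-(-Real.log u - c + c)) = u
      rw [show -(-Real.log u - c + c) = Real.log u by ring, Real.exp_log hu1]

lemma covDeriv (c : ℝ) (t : ℝ) :
    HasDerivAt (fun t : ℝ => Real.exp (-(t + c))) (-Real.exp (-(t + c))) t := by
  have h := (((hasDerivAt_id t).add_const c).neg).exp
  simpa using h

lemma covInj (c : ℝ) : Set.InjOn (fun t : ℝ => Real.exp (-(t + c))) (Set.Ici 0) := by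
  intro x _ y _ h
  simp only [Real.exp_eq_exp] at h
  linarith

lemma cov (c : ℝ) (F : ℝ → ℝ) :
    ∫ u in Set.Ioc 0 (Real.exp (-c)), F u
      = ∫ t in Set.Ici 0, Real.exp (-(t + c)) * F (Real.exp (-(t + c))) := by
  rw [← img c,
    MeasureTheory.integral_image_eq_integral_abs_deriv_smul measurableSet_Ici
      (fun t _ => (covDeriv c t).hasDerivWithinAt) (covInj c) F]
  simp [abs_of_nonneg (Real.exp_pos _).le]

lemma covInt (c : ℝ) (F : ℝ → ℝ) :
    IntegrableOn F (Set.Ioc 0 (Real.exp (-c))) ↔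
      IntegrableOn (fun t => Real.exp (-(t + c)) * F (Real.exp (-(t + c)))) (Set.Ici 0) := by
  rw [← img c,
    MeasureTheory.integrableOn_image_iff_integrableOn_abs_deriv_smul measurableSet_Ici
      (fun t _ => (covDeriv c t).hasDerivWithinAt) (covInj c) F]
  simp only [abs_neg, abs_of_nonneg (Real.exp_pos _).le, smul_eq_mul]



noncomputable def hfun (n : ℕ) (c : ℝ) (t : ℝ) : ℝ :=
  Real.exp (-(t + c)) * (t ^ n * Real.exp (-(Real.exp (-(t + c)))))

lemma baseInt (n : ℕ) {r : ℝ} (hr : 0 < r) (k : ℝ) :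
    IntegrableOn (fun t : ℝ => k * (t ^ n * Real.exp (-(r * t)))) (Set.Ici 0) := by
  rw [integrableOn_Ici_iff_integrableOn_Ioi]
  exact (myInt n hr).const_mul k

lemma baseVal (n : ℕ) {r : ℝ} (hr : 0 < r) (k : ℝ) :
    ∫ t in Set.Ici (0 : ℝ), k * (t ^ n * Real.exp (-(r * t)))
      = k * (n.factorial / r ^ (n + 1)) := by
  rw [MeasureTheory.integral_Ici_eq_integral_Ioi, MeasureTheory.integral_const_mul,
    myGamma n hr]

set_option maxHeartbeats 1000000 in
lemma hInt (n : ℕ) (c : ℝ) : IntegrableOn (hfun n c) (Set.Ici 0) := by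
  refine MeasureTheory.Integrable.mono (baseInt n one_pos (Real.exp (-c))) ?_ ?_
  · have : Continuous (hfun n c) := by unfold hfun; fun_prop
    exact this.aestronglyMeasurable
  · filter_upwards [] with t
    have e1 : Real.exp (-(t + c)) = Real.exp (-c) * Real.exp (-(1 * t)) := by
      rw [← Real.exp_add]; congr 1; ring
    have hE : Real.exp (-(Real.exp (-(t + c)))) ≤ 1 :=
      (Real.exp_le_exp.2 (neg_nonpos.2 (Real.exp_pos _).le)).trans_eq Real.exp_zero
    simp only [hfun, Real.norm_eq_abs, abs_mul, abs_pow, Real.abs_exp, abs_abs]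
    calc Real.exp (-(t + c)) * (|t| ^ n * Real.exp (-(Real.exp (-(t + c)))))
        ≤ Real.exp (-(t + c)) * (|t| ^ n * 1) := by gcongr
      _ = Real.exp (-c) * (|t| ^ n * Real.exp (-(1 * t))) := by rw [e1]; ring

lemma mainEq (n : ℕ) (c : ℝ) :
    ∫ u in Set.Ioc 0 (Real.exp (-c)),
        (-Real.log u - c) ^ n * Real.exp (-u) = ∫ t in Set.Ici 0, hfun n c t := by
  rw [cov c (fun u => (-Real.log u - c) ^ n * Real.exp (-u))]
  congr 1
  funext t
  have : -Real.log (Real.exp (-(t + c))) - c = t := by rw [Real.log_exp]; ring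
  rw [hfun, this]

lemma mainUpper (n : ℕ) (c : ℝ) :
    ∫ t in Set.Ici (0 : ℝ), hfun n c t ≤ Real.exp (-c) * (n.factorial : ℝ) := by
  have := MeasureTheory.setIntegral_mono_on (hInt n c)
    (baseInt n one_pos (Real.exp (-c))) measurableSet_Ici (fun t ht => ?_)
  · calc ∫ t in Set.Ici (0 : ℝ), hfun n c t
        ≤ ∫ t in Set.Ici (0 : ℝ), Real.exp (-c) * (t ^ n * Real.exp (-(1 * t))) := this
      _ = Real.exp (-c) * (n.factorial / 1 ^ (n + 1)) := baseVal n one_pos _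
      _ = Real.exp (-c) * n.factorial := by norm_num
  · simp only [mem_Ici] at ht
    have e1 : Real.exp (-(t + c)) = Real.exp (-c) * Real.exp (-(1 * t)) := by
      rw [← Real.exp_add]; congr 1; ring
    have hE : Real.exp (-(Real.exp (-(t + c)))) ≤ 1 :=
      (Real.exp_le_exp.2 (neg_nonpos.2 (Real.exp_pos _).le)).trans_eq Real.exp_zero
    calc hfun n c t ≤ Real.exp (-(t + c)) * (t ^ n * 1) := by
          unfold hfun; gcongr
      _ = Real.exp (-c) * (t ^ n * Real.exp (-(1 * t))) := by rw [e1]; ring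

lemma mainLower (n : ℕ) (c : ℝ) :
    Real.exp (-c) * (n.factorial : ℝ)
        - Real.exp (-c) ^ 2 * ((n.factorial : ℝ) / 2 ^ (n + 1))
      ≤ ∫ t in Set.Ici (0 : ℝ), hfun n c t := by
  have hLint : IntegrableOn (fun t : ℝ =>
      Real.exp (-c) * (t ^ n * Real.exp (-(1 * t)))
        - Real.exp (-c) ^ 2 * (t ^ n * Real.exp (-(2 * t)))) (Set.Ici 0) :=
    (baseInt n one_pos _).sub (baseInt n two_pos _)
  have := MeasureTheory.setIntegral_mono_on hLint (hInt n c) measurableSet_Ici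
    (fun t ht => ?_)
  · calc Real.exp (-c) * (n.factorial : ℝ)
          - Real.exp (-c) ^ 2 * ((n.factorial : ℝ) / 2 ^ (n + 1))
        = Real.exp (-c) * ((n.factorial : ℝ) / 1 ^ (n + 1))
          - Real.exp (-c) ^ 2 * ((n.factorial : ℝ) / 2 ^ (n + 1)) := by norm_num
      _ = ∫ t in Set.Ici (0 : ℝ),
            (Real.exp (-c) * (t ^ n * Real.exp (-(1 * t)))
              - Real.exp (-c) ^ 2 * (t ^ n * Real.exp (-(2 * t)))) := by
          rw [MeasureTheory.integral_sub (baseInt n one_pos _) (baseInt n two_pos _),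
            baseVal n one_pos, baseVal n two_pos]
      _ ≤ ∫ t in Set.Ici (0 : ℝ), hfun n c t := this
  · simp only [mem_Ici] at ht
    have e1 : Real.exp (-(t + c)) = Real.exp (-c) * Real.exp (-(1 * t)) := by
      rw [← Real.exp_add]; congr 1; ring
    have E2 : Real.exp (-(2 * t)) = Real.exp (-(1 * t)) * Real.exp (-(1 * t)) := by
      rw [← Real.exp_add]; congr 1; ring
    have hE : 1 - Real.exp (-(t + c)) ≤ Real.exp (-(Real.exp (-(t + c)))) := by
      have := Real.add_one_le_exp (-(Real.exp (-(t + c))))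
      linarith
    calc Real.exp (-c) * (t ^ n * Real.exp (-(1 * t)))
          - Real.exp (-c) ^ 2 * (t ^ n * Real.exp (-(2 * t)))
        = Real.exp (-(t + c)) * (t ^ n * (1 - Real.exp (-(t + c)))) := by
          rw [E2, e1]; ring
      _ ≤ hfun n c t := by unfold hfun; gcongr



lemma ptb (n : ℕ) (c u : ℝ) (hu : Real.exp (-c) < u) :
    ‖(-Real.log u - c) ^ n * Real.exp (-u)‖
      ≤ ((n.factorial : ℝ) * Real.exp (2 * c) / 2 ^ n) * (u ^ 2 * Real.exp (-(1 * u))) := by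
  have hu0 : 0 < u := (Real.exp_pos _).trans hu
  have hy : 0 ≤ Real.log u + c := by
    have : -c < Real.log u := (Real.lt_log_iff_exp_lt hu0).2 hu
    linarith
  have h1 : ‖(-Real.log u - c) ^ n * Real.exp (-u)‖
      = (Real.log u + c) ^ n * Real.exp (-u) := by
    rw [norm_mul, norm_pow, Real.norm_eq_abs, Real.norm_eq_abs, Real.abs_exp,
      show -Real.log u - c = -(Real.log u + c) by ring, abs_neg, abs_of_nonneg hy]
  rw [h1]
  have hfac : (0 : ℝ) < n.factorial := by exact_mod_cast n.factorial_pos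
  have h2n : (0 : ℝ) < 2 ^ n := by positivity
  have h2 : (Real.log u + c) ^ n
      ≤ (n.factorial : ℝ) * Real.exp (2 * (Real.log u + c)) / 2 ^ n := by
    have h := Real.pow_div_factorial_le_exp (x := 2 * (Real.log u + c)) (by linarith) n
    rw [mul_pow, div_le_iff₀ hfac] at h
    rw [le_div_iff₀ h2n]
    nlinarith [h]
  have h3 : Real.exp (2 * (Real.log u + c)) = Real.exp (2 * c) * u ^ 2 := by
    rw [show 2 * (Real.log u + c) = (Real.log u + Real.log u) + 2 * c by ring,
      Real.exp_add, Real.exp_add, Real.exp_log hu0]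
    ring
  calc (Real.log u + c) ^ n * Real.exp (-u)
      ≤ ((n.factorial : ℝ) * Real.exp (2 * (Real.log u + c)) / 2 ^ n) * Real.exp (-u) :=
        mul_le_mul_of_nonneg_right h2 (Real.exp_pos _).le
    _ = ((n.factorial : ℝ) * Real.exp (2 * c) / 2 ^ n) * (u ^ 2 * Real.exp (-(1 * u))) := by
        rw [h3, one_mul]; ring

lemma Gmeas (n : ℕ) (c : ℝ) :
    Measurable (fun u : ℝ => (-Real.log u - c) ^ n * Real.exp (-u)) := by
  exact ((Real.measurable_log.neg.sub_const c).pow_const n).mul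
    (Real.measurable_exp.comp measurable_neg)

lemma tailInt (n : ℕ) (c : ℝ) :
    IntegrableOn (fun u : ℝ => (-Real.log u - c) ^ n * Real.exp (-u))
      (Set.Ioi (Real.exp (-c))) := by
  refine MeasureTheory.Integrable.mono
    (MeasureTheory.IntegrableOn.mono_set
      ((myInt 2 one_pos).const_mul ((n.factorial : ℝ) * Real.exp (2 * c) / 2 ^ n))
      (Set.Ioi_subset_Ioi (Real.exp_pos _).le)) ((Gmeas n c).aestronglyMeasurable) ?_
  filter_upwards [MeasureTheory.ae_restrict_mem measurableSet_Ioi] with u hu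
  refine (ptb n c u hu).trans ?_
  rw [Real.norm_eq_abs, abs_of_nonneg (by positivity)]

lemma tailLe (n : ℕ) (c : ℝ) :
    |∫ u in Set.Ioi (Real.exp (-c)), (-Real.log u - c) ^ n * Real.exp (-u)|
      ≤ ((n.factorial : ℝ) * Real.exp (2 * c) / 2 ^ n) * 2 := by
  set K := (n.factorial : ℝ) * Real.exp (2 * c) / 2 ^ n with hK
  have hK0 : 0 ≤ K := by positivity
  have hbig : IntegrableOn (fun u : ℝ => K * (u ^ 2 * Real.exp (-(1 * u)))) (Set.Ioi 0) :=
    (myInt 2 one_pos).const_mul K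
  have h1 : ‖∫ u in Set.Ioi (Real.exp (-c)), (-Real.log u - c) ^ n * Real.exp (-u)‖
      ≤ ∫ u in Set.Ioi (Real.exp (-c)), K * (u ^ 2 * Real.exp (-(1 * u))) := by
    refine MeasureTheory.norm_integral_le_of_norm_le
      (MeasureTheory.IntegrableOn.mono_set hbig (Set.Ioi_subset_Ioi (Real.exp_pos _).le)) ?_
    filter_upwards [MeasureTheory.ae_restrict_mem measurableSet_Ioi] with u hu
    exact ptb n c u hu
  have h2 : ∫ u in Set.Ioi (Real.exp (-c)), K * (u ^ 2 * Real.exp (-(1 * u)))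
      ≤ ∫ u in Set.Ioi (0 : ℝ), K * (u ^ 2 * Real.exp (-(1 * u))) := by
    refine MeasureTheory.setIntegral_mono_set hbig ?_ ?_
    · filter_upwards [] with u; positivity
    · exact HasSubset.Subset.eventuallyLE (Set.Ioi_subset_Ioi (Real.exp_pos _).le)
  have h3 : ∫ u in Set.Ioi (0 : ℝ), K * (u ^ 2 * Real.exp (-(1 * u))) = K * 2 := by
    rw [MeasureTheory.integral_const_mul, myGamma 2 one_pos]
    norm_num [Nat.factorial]
  rw [← Real.norm_eq_abs]
  linarith [h1, h2, h3.le]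



lemma mainInt (n : ℕ) (c : ℝ) :
    IntegrableOn (fun u : ℝ => (-Real.log u - c) ^ n * Real.exp (-u))
      (Set.Ioc 0 (Real.exp (-c))) := by
  rw [covInt]
  have e : (fun t : ℝ => Real.exp (-(t + c)) *
      ((-Real.log (Real.exp (-(t + c))) - c) ^ n * Real.exp (-(Real.exp (-(t + c))))))
      = hfun n c := by
    funext t
    have : -Real.log (Real.exp (-(t + c))) - c = t := by rw [Real.log_exp]; ring
    rw [hfun, this]
  rw [e]
  exact hInt n c

lemma keyBound (n : ℕ) (c : ℝ) :
    ‖(∫ u in Set.Ioi (0 : ℝ), (-Real.log u - c) ^ n * Real.exp (-u)) / (n.factorial : ℝ)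
        - Real.exp (-c)‖
      ≤ (Real.exp (-c) ^ 2 / 2 + 2 * Real.exp (2 * c)) * (1 / 2) ^ n := by
  set A := Real.exp (-c) with hA
  have hfac : (0 : ℝ) < n.factorial := by exact_mod_cast n.factorial_pos
  have h2n : (0 : ℝ) < 2 ^ n := by positivity
  have hsplit : ∫ u in Set.Ioi (0 : ℝ), (-Real.log u - c) ^ n * Real.exp (-u)
      = (∫ u in Set.Ioc 0 A, (-Real.log u - c) ^ n * Real.exp (-u))
        + ∫ u in Set.Ioi A, (-Real.log u - c) ^ n * Real.exp (-u) := by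
    rw [← MeasureTheory.setIntegral_union (Set.Ioc_disjoint_Ioi le_rfl) measurableSet_Ioi
      (mainInt n c) (tailInt n c), Set.Ioc_union_Ioi_eq_Ioi (Real.exp_pos _).le]
  set I := ∫ u in Set.Ioi (0 : ℝ), (-Real.log u - c) ^ n * Real.exp (-u) with hI
  set M := ∫ t in Set.Ici (0 : ℝ), hfun n c t with hM
  set T := ∫ u in Set.Ioi A, (-Real.log u - c) ^ n * Real.exp (-u) with hT
  have hIMT : I = M + T := by rw [hsplit, mainEq n c]
  have hMu := mainUpper n c
  have hMl := mainLower n c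
  have hTb := tailLe n c
  rw [← hA] at hMu hMl hTb
  rw [← hM] at hMu hMl
  rw [← hT] at hTb
  rw [abs_le] at hTb
  have e3 : (n.factorial : ℝ) * Real.exp (2 * c) / 2 ^ n * 2
      = 2 * Real.exp (2 * c) * ((n.factorial : ℝ) / 2 ^ n) := by ring
  have hpos : 0 ≤ A ^ 2 / 2 * ((n.factorial : ℝ) / 2 ^ n) := by positivity
  rw [e3] at hTb
  have hkey : |I - A * n.factorial|
      ≤ (A ^ 2 / 2 + 2 * Real.exp (2 * c)) * ((n.factorial : ℝ) / 2 ^ n) := by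
    rw [abs_le]
    constructor
    · rw [hIMT]
      have : A ^ 2 * ((n.factorial : ℝ) / 2 ^ (n + 1))
          = A ^ 2 / 2 * ((n.factorial : ℝ) / 2 ^ n) := by
        rw [pow_succ]; ring
      linarith [hMl, hTb.1]
    · rw [hIMT]
      linarith [hMu, hTb.2]
  have : ‖I / (n.factorial : ℝ) - A‖ = |I - A * n.factorial| / n.factorial := by
    rw [Real.norm_eq_abs, ← abs_of_pos hfac, ← abs_div]
    congr 1
    field_simp
    rw [abs_of_pos hfac]; ring
  rw [this]
  rw [div_le_iff₀ hfac]
  calc |I - A * n.factorial|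
      ≤ (A ^ 2 / 2 + 2 * Real.exp (2 * c)) * ((n.factorial : ℝ) / 2 ^ n) := hkey
    _ = (A ^ 2 / 2 + 2 * Real.exp (2 * c)) * (1 / 2) ^ n * n.factorial := by
        rw [div_pow, one_pow]; ring

/-- Let `γ` be the Euler–Mascheroni constant and
`m_n' = ∫_0^∞ (-log u - γ)^n e^{-u} du` the `n`-th central moment of the standard
Gumbel distribution.  Then `m_n'/n! → e^{-γ}` as `n → ∞`;
equivalently, `m_n' ~ n! e^{-γ}`. -/
theorem stmt_19 :
    Filter.Tendsto
      (fun n : ℕ =>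
        (∫ u in Set.Ioi (0 : ℝ),
            (-Real.log u - Real.eulerMascheroniConstant) ^ n * Real.exp (-u)) /
          (n.factorial : ℝ))
      Filter.atTop (nhds (Real.exp (-Real.eulerMascheroniConstant))) := by
  set c := Real.eulerMascheroniConstant
  set A := Real.exp (-c) with hA
  have h0 : Tendsto (fun n : ℕ =>
      (∫ u in Set.Ioi (0 : ℝ), (-Real.log u - c) ^ n * Real.exp (-u)) / (n.factorial : ℝ)
        - A) atTop (nhds 0) := by
    refine squeeze_zero_norm (fun n => keyBound n c) ?_
    have := (tendsto_pow_atTop_nhds_zero_of_lt_one (by norm_num : (0:ℝ) ≤ 1/2)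
      (by norm_num : (1/2 : ℝ) < 1)).const_mul (A ^ 2 / 2 + 2 * Real.exp (2 * c))
    simpa using this
  have := h0.add_const A
  simpa using this
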